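/- Let X be a finite family of sets of runs of an n-CPS described by a well-formed grammar, and let X, Y ∈ X. Then: (1) the family X ∪ {X ∪ Y} is described by a well-formed grammar in which lev(X ∪ Y) = max(lev(X), lev(Y)); and (2) there is a finite family Y ⊇ X ∪ {X∘Y} described by a well-formed grammar in which lev(X∘Y) = max(lev(X), lev(Y)), where X∘Y := {R∘S : R ∈ X, S ∈ Y}. -/

import Mathlib

namespace CPDS

/-- Tower of exponentials: `expTower 0 i = i`, `expTower (k+1) i = 2^(expTower k i)`. -/
def expTower : ℕ → ℕ → ℕ
  | 0, i => i
  | k+1, i => 2 ^ expTower k i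

/-- Raw higher-order stacks over a stack alphabet `Γ`.
A `0`-stack is `atom γ k t` (symbol `γ` with a link of level `k` storing the stack `t`);
a `(k+1)`-stack is a list of `k`-stacks (topmost first). -/
inductive RawSt (Γ : Type) : Type where
  | atom (γ : Γ) (k : ℕ) (t : RawSt Γ) : RawSt Γ
  | seq (l : List (RawSt Γ)) : RawSt Γ

variable {Γ Q A : Type}

/-- The topmost stack `d` levels down (topmost `(lvl-d)`-stack of an `lvl`-stack). -/
def topAt : RawSt Γ → ℕ → Option (RawSt Γ)
  | s, 0 => some s
  | .seq (h :: _), d+1 => topAt h d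
  | .seq [], _+1 => none
  | .atom _ _ _, _+1 => none

/-- Modify the topmost stack `d` levels down. -/
def modAt : RawSt Γ → ℕ → (RawSt Γ → Option (RawSt Γ)) → Option (RawSt Γ)
  | s, 0, f => f s
  | .seq (h :: t), d+1, f => (modAt h d f).map (fun h' => RawSt.seq (h' :: t))
  | .seq [], _+1, _ => none
  | .atom _ _ _, _+1, _ => none

/-- Stack operations of a level-`n` collapsible pushdown system. -/
inductive Op (Γ : Type) where
  | pop (i : ℕ)
  | push (i : ℕ)
  | push1 (γ : Γ) (k : ℕ)
  | col (i : ℕ)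

/-- The level of a stack operation. -/
def Op.level : Op Γ → ℕ
  | .pop i => i
  | .push i => i
  | .push1 _ _ => 1
  | .col i => i

/-- Applying a stack operation to an `n`-stack (partial). -/
def applyOp (n : ℕ) : Op Γ → RawSt Γ → Option (RawSt Γ)
  | .pop i, s =>
      if 1 ≤ i ∧ i ≤ n then
        modAt s (n - i) (fun u =>
          match u with
          | .seq (_ :: r :: rest) => some (.seq (r :: rest))
          | _ => none)
      else none
  | .push i, s =>
      if 2 ≤ i ∧ i ≤ n then
        modAt s (n - i) (fun u =>
          match u with
          | .seq (h :: t) => some (.seq (h :: h :: t))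
          | _ => none)
      else none
  | .push1 γ k, s =>
      if 1 ≤ k ∧ k ≤ n then
        match topAt s (n - k) with
        | some (.seq (_ :: rest)) =>
            modAt s (n - 1) (fun u =>
              match u with
              | .seq l => some (.seq (.atom γ k (.seq rest) :: l))
              | _ => none)
        | _ => none
      else none
  | .col i, s =>
      if 1 ≤ i ∧ i ≤ n then
        match topAt s n with
        | some (.atom _ k t) =>
            if k = i then
              match t with
              | .seq (_ :: _) => modAt s (n - i) (fun _ => some t)
              | _ => none
            else none
        | _ => none
      else none

/-- The initial `k`-stack (with `⊥ = bot` and links of level `n` to the empty stack). -/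
def botSt (bot : Γ) (n : ℕ) : ℕ → RawSt Γ
  | 0 => .atom bot n (.seq [])
  | k+1 => .seq [botSt bot n k]

/-- A pushdown store: an `n`-stack obtainable from the initial `n`-stack by stack operations. -/
def IsPds (n : ℕ) (bot : Γ) (s : RawSt Γ) : Prop :=
  ∃ ops : List (Op Γ),
    ops.foldl (fun acc op => acc.bind (applyOp n op)) (some (botSt bot n n)) = some s

/-- The topmost stack symbol of an `n`-stack. -/
def topSym (n : ℕ) (s : RawSt Γ) : Option Γ :=
  match topAt s n with
  | some (.atom γ _ _) => some γ
  | _ => none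

/-- A transition of a collapsible pushdown system; `lab = none` denotes `ε`. -/
structure Trans (Γ Q A : Type) where
  src : Q
  sym : Γ
  lab : Option A
  tgt : Q
  op : Op Γ

/-- A collapsible pushdown system of level `n`. -/
structure CPS (Γ Q A : Type) (n : ℕ) where
  bot : Γ
  qI : Q
  Δ : Set (Trans Γ Q A)

/-- One step from configuration `c` to `d` using transition `t`. -/
def StepAt (n : ℕ) (t : Trans Γ Q A) (c d : Q × RawSt Γ) : Prop :=
  c.1 = t.src ∧ topSym n c.2 = some t.sym ∧ d.1 = t.tgt ∧ applyOp n t.op c.2 = some d.2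

/-- Validity of a list of steps starting from configuration `c`. -/
def RunOk (n : ℕ) (S : CPS Γ Q A n) : (Q × RawSt Γ) → List (Trans Γ Q A × (Q × RawSt Γ)) → Prop
  | _, [] => True
  | c, (t, d) :: rest => t ∈ S.Δ ∧ StepAt n t c d ∧ RunOk n S d rest

/-- A run of a collapsible pushdown system. -/
structure Run (n : ℕ) (S : CPS Γ Q A n) : Type where
  start : Q × RawSt Γ
  startPds : IsPds n S.bot start.2
  steps : List (Trans Γ Q A × (Q × RawSt Γ))
  ok : RunOk n S start steps

/-- Length of a run. -/
def Run.len {n : ℕ} {S : CPS Γ Q A n} (R : Run n S) : ℕ := R.steps.length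

/-- The `i`-th configuration of a run. -/
def Run.conf {n : ℕ} {S : CPS Γ Q A n} (R : Run n S) (i : ℕ) : Q × RawSt Γ :=
  (R.start :: R.steps.map Prod.snd).getD i R.start

/-- The transition used at step `i` of a run. -/
def Run.tr? {n : ℕ} {S : CPS Γ Q A n} (R : Run n S) (i : ℕ) : Option (Trans Γ Q A) :=
  (R.steps[i]?).map Prod.fst

/-- The stack operation performed at step `i` of a run. -/
def Run.op? {n : ℕ} {S : CPS Γ Q A n} (R : Run n S) (i : ℕ) : Option (Op Γ) :=
  (R.tr? i).map Trans.op

/-! ### Positions in stacks -/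

/-- A position: a simple position `head` (a tuple of coordinates, topmost level first)
followed by a chain of links `(k, y)` (a link of level `k` together with a simple
position `y` in the linked stack). -/
structure Pos where
  head : List ℕ
  tail : List (ℕ × List ℕ)
deriving DecidableEq

/-- The sizes of the topmost `i`-stacks of an `m`-stack (levels `m, m-1, …, 1`). -/
def sizes : ℕ → RawSt Γ → List ℕ
  | 0, _ => []
  | m+1, .seq (h :: t) => (t.length + 1) :: sizes m h
  | m+1, .seq [] => 0 :: List.replicate m 0
  | m+1, .atom _ _ _ => List.replicate (m+1) 0

/-- `TOP^k(s)`: the position of the topmost `k`-stack of an `n`-stack `s`. -/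
def topPos (n : ℕ) (s : RawSt Γ) (k : ℕ) : Pos :=
  ⟨(sizes n s).take (n - k) ++ List.replicate k 0, []⟩

/-- The position of the second topmost `(k-1)`-stack in the topmost `k`-stack of `s`. -/
def secondTopPos (n : ℕ) (s : RawSt Γ) (k : ℕ) : Pos :=
  ⟨(sizes n s).take (n - k) ++ ((sizes n s).getD (n - k) 0 - 1) :: List.replicate (k - 1) 0, []⟩

/-- The stack located at a simple position (following nonzero coordinates; the
remaining coordinates must be zero). -/
def stackAtAux : RawSt Γ → List ℕ → Option (RawSt Γ)
  | s, [] => some s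
  | s, 0 :: rest => if rest.all (· == 0) then some s else none
  | .seq l, (i+1) :: rest =>
      match l[l.length - (i+1)]? with
      | some t => stackAtAux t rest
      | none => none
  | .atom _ _ _, (_+1) :: _ => none

/-- The stack located at a (possibly linked) position. -/
def posStackAux : RawSt Γ → List ℕ → List (ℕ × List ℕ) → Option (RawSt Γ)
  | s, h, [] => stackAtAux s h
  | s, h, (k, y) :: rest =>
      match stackAtAux s h with
      | some (.atom _ k' t) =>
          if k' = k ∧ y.length = k ∧ y ≠ List.replicate k 0 then posStackAux t y rest else none
      | _ => none

/-- `x` is a (valid) position in the `n`-stack `s`. -/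
def PosValid (n : ℕ) (s : RawSt Γ) (x : Pos) : Prop :=
  x.head.length = n ∧ (posStackAux s x.head x.tail).isSome

/-- Remove trailing zeros. -/
def stripZ (l : List ℕ) : List ℕ := (l.reverse.dropWhile (· == 0)).reverse

/-- The number of trailing zeros of a simple position (the level of the stack it points to). -/
def trailingZeros (l : List ℕ) : ℕ := (l.reverse.takeWhile (· == 0)).length

/-- The components (simple positions) of a position. -/
def comps (x : Pos) : List (List ℕ) := x.head :: x.tail.map Prod.snd

/-- The last component of a position. -/
def lastComp (x : Pos) : List ℕ := (x.tail.map Prod.snd).getLastD x.head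

/-- `PointsInto y x`: the position `y` points into the stack at the position `x`. -/
def PointsInto (y x : Pos) : Prop :=
  y ≠ x ∧
  (y.tail.map Prod.fst).take x.tail.length = x.tail.map Prod.fst ∧
  (comps y).take x.tail.length = (comps x).take x.tail.length ∧
  ∃ c, (comps y)[x.tail.length]? = some c ∧ stripZ (lastComp x) <+: c

/-- One packing step: replace the last `k` coordinates by `y`. -/
def packStep (acc : List ℕ) (p : ℕ × List ℕ) : List ℕ := acc.take (acc.length - p.1) ++ p.2

/-- The list `[pack_0(x), pack_1(x), …, pack_m(x)]`. -/
def packs (x : Pos) : List (List ℕ) := x.tail.scanl packStep x.head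

/-- `pack_{NestingRank(x)}(x)`. -/
def packFull (x : Pos) : List ℕ := x.tail.foldl packStep x.head

/-- Lexicographic (non-strict) order on simple positions. -/
def lexLe (a b : List ℕ) : Prop := a = b ∨ List.Lex (· < ·) a b

/-- `a ≺_k b`: `a` is lexicographically smaller than `b`, the first difference
being the level-`k` coordinate (in an `n`-stack). -/
def ltAt (n k : ℕ) (a b : List ℕ) : Prop :=
  a.take (n - k) = b.take (n - k) ∧ a.getD (n - k) 0 < b.getD (n - k) 0

/-! ### The history function -/

/-- History of a position across one step: `op` transforms the stack `s` into `t`;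
a position of `t` is traced back to a position of `s`. -/
def histStep (n : ℕ) (op : Op Γ) (s t : RawSt Γ) (x : Pos) : Pos :=
  match op with
  | .push1 _ _ =>
      if x.head = sizes n t then
        match x.tail with
        | [] => ⟨(x.head.take (n - 1)) ++ [x.head.getD (n - 1) 0 - 1], []⟩
        | (k', y1) :: rest => ⟨x.head.take (n - k') ++ y1, rest⟩
      else x
  | .push i =>
      if x.head.take (n - i + 1) = (sizes n t).take (n - i + 1) then
        ⟨x.head.take (n - i) ++ (x.head.getD (n - i) 0 - 1) :: x.head.drop (n - i + 1), x.tail⟩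
      else x
  | .col k =>
      if x.head.take (n - k) = (sizes n t).take (n - k) ∧
          ¬(x.tail = [] ∧ x.head.drop (n - k) = List.replicate k 0) then
        ⟨sizes n s, (k, x.head.drop (n - k)) :: x.tail⟩
      else x
  | .pop _ => x

/-- For each step of a run: its operation together with the source and target stacks. -/
def tripsAux : (Q × RawSt Γ) → List (Trans Γ Q A × (Q × RawSt Γ)) →
    List (Op Γ × RawSt Γ × RawSt Γ)
  | _, [] => []
  | c, (t, d) :: rest => (t.op, c.2, d.2) :: tripsAux d rest

def Run.trips {n : ℕ} {S : CPS Γ Q A n} (R : Run n S) : List (Op Γ × RawSt Γ × RawSt Γ) :=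
  tripsAux R.start R.steps

/-- `R.hist i j x`: the history of the position `x` (of the stack of `R(j)`)
along the subrun `R[i,j]`, yielding a position of the stack of `R(i)`. -/
def Run.hist {n : ℕ} {S : CPS Γ Q A n} (R : Run n S) (i j : ℕ) (x : Pos) : Pos :=
  ((R.trips.drop i).take (j - i)).foldr (fun tr acc => histStep n tr.1 tr.2.1 tr.2.2 acc) x

/-! ### Returns, colreturns, pumping runs, non-erasing runs -/

/-- The subrun `R[i,j]` is a `k`-return. -/
def RetSeg {n : ℕ} {S : CPS Γ Q A n} (R : Run n S) (i j k : ℕ) : Prop :=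
  2 ≤ (sizes n (R.conf i).2).getD (n - k) 0 ∧
  R.hist i j (topPos n (R.conf j).2 (k - 1)) = secondTopPos n (R.conf i).2 k ∧
  ∀ m, i + 1 ≤ m → m + 1 ≤ j →
    R.hist m j (topPos n (R.conf j).2 (k - 1)) ≠ topPos n (R.conf m).2 (k - 1)

/-- The subrun `R[i,j]` is a `k`-colreturn. -/
def ColSeg {n : ℕ} {S : CPS Γ Q A n} (R : Run n S) (i j k : ℕ) : Prop :=
  (∃ x : List ℕ,
    R.hist i j (topPos n (R.conf j).2 (k - 1)) = ⟨sizes n (R.conf i).2, [(k, x)]⟩) ∧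
  ∀ m, i ≤ m → m + 1 ≤ j → (R.hist m j (topPos n (R.conf j).2 (k - 1))).tail ≠ []

/-- The subrun `R[i,j]` is a pumping run. -/
def PumpSeg {n : ℕ} {S : CPS Γ Q A n} (R : Run n S) (i j : ℕ) : Prop :=
  R.hist i j (topPos n (R.conf j).2 0) = topPos n (R.conf i).2 0

/-- The subrun `R[i,j]` is `TOP^k`-non-erasing. -/
def NESeg {n : ℕ} {S : CPS Γ Q A n} (R : Run n S) (i j k : ℕ) : Prop :=
  ∀ m, i ≤ m → m ≤ j → PosValid n (R.conf m).2 (topPos n (R.conf i).2 k)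

/-- The change level of the subrun `R[i,j]`: the maximal level `lv` such that the
topmost `lv`-stacks of `R(i)` and `R(j)` have different sizes. -/
def changeLevSeg {n : ℕ} {S : CPS Γ Q A n} (R : Run n S) (i j : ℕ) : ℕ :=
  (Finset.range (n + 1)).sup fun lv =>
    if (sizes n (R.conf i).2).getD (n - lv) 0 ≠ (sizes n (R.conf j).2).getD (n - lv) 0 then lv
    else 0

/-- `op` is a push of level `j` (for `j = 1`: any `push¹_{a,l}`). -/
def IsPushOfLevel (op : Op Γ) (j : ℕ) : Prop :=
  (2 ≤ j ∧ op = Op.push j) ∨ (j = 1 ∧ ∃ a l, op = Op.push1 a l)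

/-! ### Graphs: reachability and the ε-contraction -/

/-- The initial configuration. -/
def initConfig (n : ℕ) (S : CPS Γ Q A n) : Q × RawSt Γ := (S.qI, botSt S.bot n n)

/-- Reachability from the initial configuration. -/
def Reachable (n : ℕ) (S : CPS Γ Q A n) (c : Q × RawSt Γ) : Prop :=
  ∃ R : Run n S, R.start = initConfig n S ∧ R.conf R.len = c

/-- An `a`-labelled edge of the ε-contraction: a run consisting of ε-steps followed
by one `a`-labelled step. -/
def EpsEdge (n : ℕ) (S : CPS Γ Q A n) (a : A) (c d : Q × RawSt Γ) : Prop :=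
  ∃ R : Run n S, R.start = c ∧ R.conf R.len = d ∧ 1 ≤ R.len ∧
    (∀ i, i + 1 < R.len → ∃ t, R.tr? i = some t ∧ t.lab = none) ∧
    (∃ t, R.tr? (R.len - 1) = some t ∧ t.lab = some a)

/-- A node of the ε-contraction: a reachable configuration that is the target of a
non-ε-labelled transition from a reachable configuration. -/
def GNode (n : ℕ) (S : CPS Γ Q A n) (c : Q × RawSt Γ) : Prop :=
  Reachable n S c ∧ ∃ d t a, Reachable n S d ∧ t ∈ S.Δ ∧ t.lab = some a ∧ StepAt n t d c

/-! ### Grammars of runs -/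

/-- A (context-free) rule over a family of sets of runs indexed by `I`,
with transitions as terminals. -/
inductive Rule (I Γ Q A : Type) where
  | nil (X : I)
  | one (X : I) (δ : Trans Γ Q A)
  | two (X : I) (δ : Trans Γ Q A) (Y : I)
  | three (X : I) (δ : Trans Γ Q A) (Y Z : I)

/-- The left-hand side of a rule. -/
def Rule.lhs {I : Type} : Rule I Γ Q A → I
  | .nil X => X
  | .one X _ => X
  | .two X _ _ => X
  | .three X _ _ _ => X

/-- Constraint on pop/collapse levels of an operation. -/
def opOK (op : Op Γ) (l : ℕ) : Prop :=
  ∀ k, (op = Op.pop k ∨ op = Op.col k) → k ≤ l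

/-- Well-formed rules. -/
def WfRule {I : Type} (n : ℕ) (S : CPS Γ Q A n) (Xs : I → Set (Run n S)) (lev : I → ℕ) :
    Rule I Γ Q A → Prop
  | .nil _ => True
  | .one X δ => δ ∈ S.Δ ∧ opOK δ.op (lev X)
  | .two X δ Y => δ ∈ S.Δ ∧ lev Y ≤ lev X ∧ opOK δ.op (lev Y)
  | .three X δ Y Z => δ ∈ S.Δ ∧ lev Z ≤ lev X ∧ opOK δ.op (lev Y) ∧
      ∀ R : Run n S, (∃ T ∈ Xs Y, R.steps = (δ, T.start) :: T.steps) →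
        topAt (R.conf 0).2 (n - lev Y) = topAt (R.conf R.len).2 (n - lev Y)

/-- A run `R` is described by a rule. -/
def DescribedBy {I : Type} {n : ℕ} {S : CPS Γ Q A n} (Xs : I → Set (Run n S))
    (R : Run n S) : Rule I Γ Q A → Prop
  | .nil _ => R.steps = []
  | .one _ δ => ∃ d, R.steps = [(δ, d)]
  | .two _ δ Y => ∃ T ∈ Xs Y, R.steps = (δ, T.start) :: T.steps
  | .three _ δ Y Z =>
      ∃ T ∈ Xs Y, ∃ U ∈ Xs Z, U.start = T.conf T.len ∧
        R.steps = (δ, T.start) :: (T.steps ++ U.steps)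

/-- The family `Xs` (with levels `lev`) is described by the well-formed grammar `rules`. -/
def Describes {I : Type} (n : ℕ) (S : CPS Γ Q A n) (rules : Set (Rule I Γ Q A))
    (Xs : I → Set (Run n S)) (lev : I → ℕ) : Prop :=
  (∀ r ∈ rules, WfRule n S Xs lev r) ∧
  ∀ (i : I) (R : Run n S), R ∈ Xs i ↔ ∃ r ∈ rules, r.lhs = i ∧ DescribedBy Xs R r

/-- Composition of two sets of runs. -/
def compSet {n : ℕ} {S : CPS Γ Q A n} (XX YY : Set (Run n S)) : Set (Run n S) :=
  {R | ∃ T ∈ XX, ∃ U ∈ YY, U.start = T.conf T.len ∧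
        R.start = T.start ∧ R.steps = T.steps ++ U.steps}


/-! ### Auxiliary lemmas -/

section Aux

variable {n : ℕ} {S : CPS Γ Q A n}

/-- The final configuration of a list of steps started at `c`. -/
def endConf (c : Q × RawSt Γ) (l : List (Trans Γ Q A × (Q × RawSt Γ))) : Q × RawSt Γ :=
  (l.map Prod.snd).getLastD c

theorem endConf_nil (c : Q × RawSt Γ) : endConf c ([] : List (Trans Γ Q A × (Q × RawSt Γ))) = c :=
  rfl

theorem endConf_cons (c : Q × RawSt Γ) (t : Trans Γ Q A) (d : Q × RawSt Γ)
    (l : List (Trans Γ Q A × (Q × RawSt Γ))) : endConf c ((t, d) :: l) = endConf d l := by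
  simp only [endConf, List.map_cons, List.getLastD_cons]

theorem endConf_append (c : Q × RawSt Γ) (l₁ l₂ : List (Trans Γ Q A × (Q × RawSt Γ))) :
    endConf c (l₁ ++ l₂) = endConf (endConf c l₁) l₂ := by
  induction l₁ generalizing c with
  | nil => rfl
  | cons h t ih => obtain ⟨th, dh⟩ := h; rw [List.cons_append, endConf_cons, endConf_cons, ih]

theorem getD_len (m : List (Q × RawSt Γ)) (c d : Q × RawSt Γ) :
    (c :: m).getD m.length d = m.getLastD c := by
  induction m generalizing c with
  | nil => rfl
  | cons h t ih => rw [List.getLastD_cons]; simpa using ih h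

theorem conf_len (R : Run n S) : R.conf R.len = endConf R.start R.steps := by
  have := getD_len (R.steps.map Prod.snd) R.start R.start
  simp only [List.length_map] at this
  simpa [Run.conf, Run.len, endConf] using this

theorem runOk_append {c : Q × RawSt Γ} {l₁ l₂ : List (Trans Γ Q A × (Q × RawSt Γ))}
    (h₁ : RunOk n S c l₁) (h₂ : RunOk n S (endConf c l₁) l₂) : RunOk n S c (l₁ ++ l₂) := by
  induction l₁ generalizing c with
  | nil => exact h₂
  | cons h t ih =>
    obtain ⟨th, dh⟩ := h
    rw [endConf_cons] at h₂
    exact ⟨h₁.1, h₁.2.1, ih h₁.2.2 h₂⟩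

theorem runOk_prefix {c : Q × RawSt Γ} {l₁ l₂ : List (Trans Γ Q A × (Q × RawSt Γ))}
    (h : RunOk n S c (l₁ ++ l₂)) : RunOk n S c l₁ := by
  induction l₁ generalizing c with
  | nil => trivial
  | cons hd t ih =>
    obtain ⟨th, dh⟩ := hd
    exact ⟨h.1, h.2.1, ih h.2.2⟩

theorem run_ext {R T : Run n S} (h₁ : R.start = T.start) (h₂ : R.steps = T.steps) : R = T := by
  cases R; cases T
  cases h₁; cases h₂
  rfl

/-- Relabel the left-hand side of a rule to `j` and its body nonterminals via `f`. -/
def Rule.relabel {I J : Type} (f : I → J) (j : J) : Rule I Γ Q A → Rule J Γ Q A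
  | .nil _ => .nil j
  | .one _ δ => .one j δ
  | .two _ δ Y => .two j δ (f Y)
  | .three _ δ Y Z => .three j δ (f Y) (f Z)

theorem Rule.lhs_relabel {I J : Type} (f : I → J) (j : J) (r : Rule I Γ Q A) :
    (r.relabel f j).lhs = j := by
  cases r <;> rfl

theorem describedBy_relabel {I J : Type} {Xs : I → Set (Run n S)} {Xs' : J → Set (Run n S)}
    (f : I → J) (hf : ∀ i, Xs' (f i) = Xs i) (j : J) (r : Rule I Γ Q A) (R : Run n S) :
    DescribedBy Xs' R (r.relabel f j) ↔ DescribedBy Xs R r := by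
  cases r <;> simp [DescribedBy, Rule.relabel, hf]

theorem opOK_mono {op : Op Γ} {l l' : ℕ} (h : opOK op l) (hl : l ≤ l') : opOK op l' :=
  fun k hk => (h k hk).trans hl

theorem wfRule_relabel {I J : Type} {Xs : I → Set (Run n S)} {Xs' : J → Set (Run n S)}
    {lev : I → ℕ} {lev' : J → ℕ} (f : I → J)
    (hf : ∀ i, Xs' (f i) = Xs i) (hl : ∀ i, lev' (f i) = lev i)
    {j : J} {r : Rule I Γ Q A} (hj : lev r.lhs ≤ lev' j)
    (h : WfRule n S Xs lev r) : WfRule n S Xs' lev' (r.relabel f j) := by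
  cases r with
  | nil => trivial
  | one X δ => exact ⟨h.1, opOK_mono h.2 hj⟩
  | two X δ Y =>
    refine ⟨h.1, ?_, ?_⟩
    · rw [hl Y]; exact h.2.1.trans hj
    · rw [hl Y]; exact h.2.2
  | three X δ Y Z =>
    refine ⟨h.1, ?_, ?_, ?_⟩
    · rw [hl Z]; exact h.2.1.trans hj
    · rw [hl Y]; exact h.2.2.1
    · intro R hR
      rw [hl Y]
      refine h.2.2.2 R ?_
      rwa [hf Y] at hR

end Aux

/-- **Lemma (closure under union and composition).** The class of families described by
well-formed grammars is closed under adding unions and compositions, with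
`lev(X ∪ Y) = lev(X∘Y) = max(lev X, lev Y)`. -/
theorem closure_union_comp {Γ Q A I : Type} [Fintype Γ] [Fintype Q] [Fintype A] [Finite I]
    (n : ℕ) (hn : 1 ≤ n) (S : CPS Γ Q A n)
    (Xs : I → Set (Run n S)) (lev : I → ℕ) (hlev : ∀ i, lev i ≤ n)
    (rules : Set (Rule I Γ Q A)) (hdesc : Describes n S rules Xs lev)
    (X Y : I) :
    (∃ rules' : Set (Rule (I ⊕ Unit) Γ Q A),
      Describes n S rules' (Sum.elim Xs fun _ => Xs X ∪ Xs Y)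
        (Sum.elim lev fun _ => max (lev X) (lev Y))) ∧
    (∃ (J : Type) (_ : Finite J) (Xs' : J → Set (Run n S)) (lev' : J → ℕ)
        (rules' : Set (Rule J Γ Q A)) (j0 : J),
      (∀ i : I, ∃ j : J, Xs' j = Xs i ∧ lev' j = lev i) ∧
      Xs' j0 = compSet (Xs X) (Xs Y) ∧
      lev' j0 = max (lev X) (lev Y) ∧
      (∀ j, lev' j ≤ n) ∧
      Describes n S rules' Xs' lev') := by
  constructor
  · -- union
    refine ⟨{r' | ∃ r ∈ rules, r' = r.relabel Sum.inl (Sum.inl r.lhs)} ∪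
            {r' | ∃ r ∈ rules, (r.lhs = X ∨ r.lhs = Y) ∧ r' = r.relabel Sum.inl (Sum.inr ())},
            ?_, ?_⟩
    · rintro r' (⟨r, hr, rfl⟩ | ⟨r, hr, hXY, rfl⟩)
      · exact wfRule_relabel Sum.inl (fun _ => rfl) (fun _ => rfl) le_rfl (hdesc.1 r hr)
      · refine wfRule_relabel Sum.inl (fun _ => rfl) (fun _ => rfl) ?_ (hdesc.1 r hr)
        rcases hXY with h | h <;> rw [h] <;> simp
    · rintro (i | u) R
      · constructor
        · intro hR
          obtain ⟨r, hr, hlhs, hd⟩ := (hdesc.2 i R).mp hR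
          refine ⟨r.relabel Sum.inl (Sum.inl r.lhs), Or.inl ⟨r, hr, rfl⟩, ?_, ?_⟩
          · rw [Rule.lhs_relabel, hlhs]
          · exact (describedBy_relabel Sum.inl (fun _ => rfl) _ r R).mpr hd
        · rintro ⟨r', (⟨r, hr, rfl⟩ | ⟨r, hr, hXY, rfl⟩), hlhs, hd⟩
          · rw [Rule.lhs_relabel] at hlhs
            injection hlhs with hlhs
            refine (hdesc.2 i R).mpr ⟨r, hr, hlhs, ?_⟩
            exact (describedBy_relabel Sum.inl (fun _ => rfl) _ r R).mp hd
          · rw [Rule.lhs_relabel] at hlhs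
            exact absurd hlhs (by simp)
      · constructor
        · rintro (hR | hR)
          · obtain ⟨r, hr, hlhs, hd⟩ := (hdesc.2 X R).mp hR
            exact ⟨r.relabel Sum.inl (Sum.inr ()), Or.inr ⟨r, hr, Or.inl hlhs, rfl⟩,
              by rw [Rule.lhs_relabel], (describedBy_relabel Sum.inl (fun _ => rfl) _ r R).mpr hd⟩
          · obtain ⟨r, hr, hlhs, hd⟩ := (hdesc.2 Y R).mp hR
            exact ⟨r.relabel Sum.inl (Sum.inr ()), Or.inr ⟨r, hr, Or.inr hlhs, rfl⟩,
              by rw [Rule.lhs_relabel], (describedBy_relabel Sum.inl (fun _ => rfl) _ r R).mpr hd⟩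
        · rintro ⟨r', (⟨r, hr, rfl⟩ | ⟨r, hr, hXY, rfl⟩), hlhs, hd⟩
          · rw [Rule.lhs_relabel] at hlhs
            exact absurd hlhs (by simp)
          · have hd' := (describedBy_relabel Sum.inl (fun _ => rfl) _ r R).mp hd
            rcases hXY with h | h
            · exact Or.inl ((hdesc.2 X R).mpr ⟨r, hr, h, hd'⟩)
            · exact Or.inr ((hdesc.2 Y R).mpr ⟨r, hr, h, hd'⟩)
  · -- composition
    refine ⟨I ⊕ (I ⊕ I), inferInstance,
      Sum.elim Xs (Sum.elim (fun i => compSet (Xs i) (Xs Y)) (fun _ => Xs Y)),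
      Sum.elim lev (Sum.elim (fun i => max (lev i) (lev Y)) (fun i => max (lev i) (lev Y))),
      {r' | (∃ r ∈ rules, r' = r.relabel Sum.inl (Sum.inl r.lhs)) ∨
            (∃ i, ∃ r ∈ rules, r.lhs = Y ∧ r' = r.relabel Sum.inl (Sum.inr (Sum.inr i))) ∨
            (∃ i, Rule.nil i ∈ rules ∧ ∃ r ∈ rules, r.lhs = Y ∧
                r' = r.relabel Sum.inl (Sum.inr (Sum.inl i))) ∨
            (∃ i δ, Rule.one i δ ∈ rules ∧
                r' = Rule.two (Sum.inr (Sum.inl i)) δ (Sum.inr (Sum.inr i))) ∨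
            (∃ i δ i', Rule.two i δ i' ∈ rules ∧
                r' = Rule.two (Sum.inr (Sum.inl i)) δ (Sum.inr (Sum.inl i'))) ∨
            (∃ i δ i' i'', Rule.three i δ i' i'' ∈ rules ∧
                r' = Rule.three (Sum.inr (Sum.inl i)) δ (Sum.inl i') (Sum.inr (Sum.inl i'')))},
      Sum.inr (Sum.inl X),
      fun i => ⟨Sum.inl i, rfl, rfl⟩, rfl, rfl, ?_, ?_, ?_⟩
    · rintro (i | i | i)
      · exact hlev i
      · exact max_le (hlev i) (hlev Y)
      · exact max_le (hlev i) (hlev Y)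
    · rintro r' (⟨r, hr, rfl⟩ | ⟨i, r, hr, hlY, rfl⟩ | ⟨i, hnil, r, hr, hlY, rfl⟩ |
        ⟨i, δ, hone, rfl⟩ | ⟨i, δ, i', htwo, rfl⟩ | ⟨i, δ, i', i'', hthree, rfl⟩)
      · exact wfRule_relabel Sum.inl (fun _ => rfl) (fun _ => rfl) le_rfl (hdesc.1 r hr)
      · refine wfRule_relabel Sum.inl (fun _ => rfl) (fun _ => rfl) ?_ (hdesc.1 r hr)
        rw [hlY]; exact le_max_right _ _
      · refine wfRule_relabel Sum.inl (fun _ => rfl) (fun _ => rfl) ?_ (hdesc.1 r hr)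
        rw [hlY]; exact le_max_right _ _
      · have h := hdesc.1 _ hone
        exact ⟨h.1, le_rfl, opOK_mono h.2 (le_max_left _ _)⟩
      · have h := hdesc.1 _ htwo
        exact ⟨h.1, max_le_max h.2.1 le_rfl, opOK_mono h.2.2 (le_max_left _ _)⟩
      · have h := hdesc.1 _ hthree
        exact ⟨h.1, max_le_max h.2.1 le_rfl, h.2.2.1, h.2.2.2⟩
    · rintro (i | i | i) R
      · -- original nonterminals
        constructor
        · intro hR
          obtain ⟨r, hr, hlhs, hd⟩ := (hdesc.2 i R).mp hR
          refine ⟨r.relabel Sum.inl (Sum.inl r.lhs), Or.inl ⟨r, hr, rfl⟩, ?_, ?_⟩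
          · rw [Rule.lhs_relabel, hlhs]
          · exact (describedBy_relabel Sum.inl (fun _ => rfl) _ r R).mpr hd
        · rintro ⟨r', (⟨r, hr, rfl⟩ | ⟨i0, r, hr, hlY, rfl⟩ | ⟨i0, hnil, r, hr, hlY, rfl⟩ |
            ⟨i0, δ, hone, rfl⟩ | ⟨i0, δ, i', htwo, rfl⟩ | ⟨i0, δ, i', i'', hthree, rfl⟩),
            hlhs, hd⟩
          · rw [Rule.lhs_relabel] at hlhs
            injection hlhs with hlhs
            refine (hdesc.2 i R).mpr ⟨r, hr, hlhs, ?_⟩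
            exact (describedBy_relabel Sum.inl (fun _ => rfl) _ r R).mp hd
          · rw [Rule.lhs_relabel] at hlhs; simp at hlhs
          · rw [Rule.lhs_relabel] at hlhs; simp at hlhs
          · simp [Rule.lhs] at hlhs
          · simp [Rule.lhs] at hlhs
          · simp [Rule.lhs] at hlhs
      · -- the composition nonterminals ⟨i⟩ = Xs i ∘ Xs Y
        constructor
        · rintro ⟨T, hT, U, hU, hUs, hRs, hRsteps⟩
          obtain ⟨r, hr, hlhs, hd⟩ := (hdesc.2 i T).mp hT
          cases r with
          | nil i0 =>
            obtain rfl : i = i0 := (hlhs : i0 = i).symm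
            have hd' : T.steps = [] := hd
            have hRU : R = U := by
              refine run_ext ?_ ?_
              · rw [hRs, hUs, conf_len, hd', endConf_nil]
              · rw [hRsteps, hd', List.nil_append]
            obtain ⟨r2, hr2, hl2, hd2⟩ := (hdesc.2 Y U).mp hU
            refine ⟨r2.relabel Sum.inl (Sum.inr (Sum.inl i)),
              Or.inr (Or.inr (Or.inl ⟨i, hr, r2, hr2, hl2, rfl⟩)), by rw [Rule.lhs_relabel], ?_⟩
            rw [hRU]
            exact (describedBy_relabel Sum.inl (fun _ => rfl) _ r2 U).mpr hd2
          | one i0 δ =>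
            obtain rfl : i = i0 := (hlhs : i0 = i).symm
            obtain ⟨d, hTsteps⟩ := (hd : ∃ d, T.steps = [(δ, d)])
            have hds : U.start = d := by
              rw [hUs, conf_len, hTsteps, endConf_cons, endConf_nil]
            refine ⟨Rule.two (Sum.inr (Sum.inl i)) δ (Sum.inr (Sum.inr i)),
              Or.inr (Or.inr (Or.inr (Or.inl ⟨i, δ, hr, rfl⟩))), rfl, ?_⟩
            refine ⟨U, hU, ?_⟩
            rw [hRsteps, hTsteps, hds]
            rfl
          | two i0 δ i' =>
            obtain rfl : i = i0 := (hlhs : i0 = i).symm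
            obtain ⟨T', hT', hTsteps⟩ :=
              (hd : ∃ T' ∈ Xs i', T.steps = (δ, T'.start) :: T'.steps)
            have hUs' : U.start = endConf T'.start T'.steps := by
              rw [hUs, conf_len, hTsteps, endConf_cons]
            refine ⟨Rule.two (Sum.inr (Sum.inl i)) δ (Sum.inr (Sum.inl i')),
              Or.inr (Or.inr (Or.inr (Or.inr (Or.inl ⟨i, δ, i', hr, rfl⟩)))), rfl, ?_⟩
            refine ⟨⟨T'.start, T'.startPds, T'.steps ++ U.steps,
              runOk_append T'.ok (hUs' ▸ U.ok)⟩,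
              ⟨T', hT', U, hU, by rw [conf_len]; exact hUs', rfl, rfl⟩, ?_⟩
            rw [hRsteps, hTsteps]
            rfl
          | three i0 δ i' i'' =>
            obtain rfl : i = i0 := (hlhs : i0 = i).symm
            obtain ⟨T1, hT1, T2, hT2, hT2s, hTsteps⟩ :=
              (hd : ∃ T1 ∈ Xs i', ∃ T2 ∈ Xs i'', T2.start = T1.conf T1.len ∧
                T.steps = (δ, T1.start) :: (T1.steps ++ T2.steps))
            have h1 : T2.start = endConf T1.start T1.steps := by rw [hT2s, conf_len]
            have hUs' : U.start = endConf T2.start T2.steps := by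
              rw [hUs, conf_len, hTsteps, endConf_cons, endConf_append, ← h1]
            refine ⟨Rule.three (Sum.inr (Sum.inl i)) δ (Sum.inl i') (Sum.inr (Sum.inl i'')),
              Or.inr (Or.inr (Or.inr (Or.inr (Or.inr ⟨i, δ, i', i'', hr, rfl⟩)))), rfl, ?_⟩
            refine ⟨T1, hT1, ⟨T2.start, T2.startPds, T2.steps ++ U.steps,
              runOk_append T2.ok (hUs' ▸ U.ok)⟩,
              ⟨T2, hT2, U, hU, by rw [conf_len]; exact hUs', rfl, rfl⟩, hT2s, ?_⟩
            rw [hRsteps, hTsteps]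
            simp [List.append_assoc]
        · rintro ⟨r', (⟨r, hr, rfl⟩ | ⟨i0, r, hr, hlY, rfl⟩ | ⟨i0, hnil, r, hr, hlY, rfl⟩ |
            ⟨i0, δ, hone, rfl⟩ | ⟨i0, δ, i', htwo, rfl⟩ | ⟨i0, δ, i', i'', hthree, rfl⟩),
            hlhs, hd⟩
          · rw [Rule.lhs_relabel] at hlhs; simp at hlhs
          · rw [Rule.lhs_relabel] at hlhs; simp at hlhs
          · rw [Rule.lhs_relabel] at hlhs
            obtain rfl : i = i0 := by simpa using hlhs.symm
            have hRY : R ∈ Xs Y := by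
              refine (hdesc.2 Y R).mpr ⟨r, hr, hlY, ?_⟩
              exact (describedBy_relabel Sum.inl (fun _ => rfl) _ r R).mp hd
            refine ⟨⟨R.start, R.startPds, [], trivial⟩,
              (hdesc.2 i _).mpr ⟨Rule.nil i, hnil, rfl, rfl⟩, R, hRY, ?_, rfl, rfl⟩
            rw [conf_len]
            rfl
          · obtain rfl : i = i0 := by simpa [Rule.lhs] using hlhs.symm
            obtain ⟨U, hU, hst⟩ :=
              (hd : ∃ U ∈ Xs Y, R.steps = (δ, U.start) :: U.steps)
            have hok := R.ok
            rw [hst] at hok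
            refine ⟨⟨R.start, R.startPds, [(δ, U.start)], ⟨hok.1, hok.2.1, trivial⟩⟩,
              (hdesc.2 i _).mpr ⟨Rule.one i δ, hone, rfl, ⟨U.start, rfl⟩⟩, U, hU, ?_, rfl, ?_⟩
            · rw [conf_len]
              show U.start = endConf R.start [(δ, U.start)]
              rw [endConf_cons, endConf_nil]
            · exact hst
          · obtain rfl : i = i0 := by simpa [Rule.lhs] using hlhs.symm
            obtain ⟨W, hW, hst⟩ := hd
            obtain ⟨T', hT', U, hU, hUs, hWs, hWsteps⟩ :=
              (hW : W ∈ compSet (Xs i') (Xs Y))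
            have hok := R.ok
            rw [hst] at hok
            obtain ⟨hδm, hstep, hrest⟩ := hok
            rw [hWsteps] at hrest
            rw [hWs] at hstep hrest
            refine ⟨⟨R.start, R.startPds, (δ, T'.start) :: T'.steps,
                ⟨hδm, hstep, runOk_prefix hrest⟩⟩,
              (hdesc.2 i _).mpr ⟨Rule.two i δ i', htwo, rfl, ⟨T', hT', rfl⟩⟩,
              U, hU, ?_, rfl, ?_⟩
            · rw [conf_len]
              show U.start = endConf R.start ((δ, T'.start) :: T'.steps)
              rw [endConf_cons, ← conf_len]
              exact hUs
            · rw [hst, hWs, hWsteps]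
              rfl
          · obtain rfl : i = i0 := by simpa [Rule.lhs] using hlhs.symm
            obtain ⟨T1, hT1, W, hW, hWst, hst⟩ := hd
            obtain ⟨T2, hT2, U, hU, hUs, hWs, hWsteps⟩ :=
              (hW : W ∈ compSet (Xs i'') (Xs Y))
            have hok := R.ok
            rw [hst] at hok
            obtain ⟨hδm, hstep, hrest⟩ := hok
            rw [hWsteps, ← List.append_assoc] at hrest
            refine ⟨⟨R.start, R.startPds, (δ, T1.start) :: (T1.steps ++ T2.steps),
                ⟨hδm, hstep, runOk_prefix hrest⟩⟩,
              (hdesc.2 i _).mpr ⟨Rule.three i δ i' i'', hthree, rfl,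
                ⟨T1, hT1, T2, hT2, hWs ▸ hWst, rfl⟩⟩,
              U, hU, ?_, rfl, ?_⟩
            · rw [conf_len]
              show U.start = endConf R.start ((δ, T1.start) :: (T1.steps ++ T2.steps))
              rw [endConf_cons, endConf_append, ← conf_len, ← hWst, hWs, ← conf_len]
              exact hUs
            · rw [hst, hWsteps]
              simp [List.append_assoc]
      · -- the copies of Y
        constructor
        · intro hR
          obtain ⟨r, hr, hlhs, hd⟩ := (hdesc.2 Y R).mp hR
          refine ⟨r.relabel Sum.inl (Sum.inr (Sum.inr i)),
            Or.inr (Or.inl ⟨i, r, hr, hlhs, rfl⟩), by rw [Rule.lhs_relabel], ?_⟩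
          exact (describedBy_relabel Sum.inl (fun _ => rfl) _ r R).mpr hd
        · rintro ⟨r', (⟨r, hr, rfl⟩ | ⟨i0, r, hr, hlY, rfl⟩ | ⟨i0, hnil, r, hr, hlY, rfl⟩ |
            ⟨i0, δ, hone, rfl⟩ | ⟨i0, δ, i', htwo, rfl⟩ | ⟨i0, δ, i', i'', hthree, rfl⟩),
            hlhs, hd⟩
          · rw [Rule.lhs_relabel] at hlhs; simp at hlhs
          · refine (hdesc.2 Y R).mpr ⟨r, hr, hlY, ?_⟩
            exact (describedBy_relabel Sum.inl (fun _ => rfl) _ r R).mp hd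
          · rw [Rule.lhs_relabel] at hlhs; simp at hlhs
          · simp [Rule.lhs] at hlhs
          · simp [Rule.lhs] at hlhs
          · simp [Rule.lhs] at hlhs

end CPDS
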